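/- Let k be an algebraically closed field of characteristic 3 and f(x) = x^9 + a_8 x^8 + ... + a_2 x^2 + x. If a_2 a_8 ≠ 0 and the second and third rows of the 4×4 matrix with rows (a_2,1,0,0), (a_5,a_4,a_3,a_2), (a_8,a_7,a_6,a_5), (0,0,1,a_8) are k-linear combinations of the first and fourth rows, then a_3 = a_2/a_8, a_4 = a_5/a_2, a_6 = a_5/a_8, a_7 = a_8/a_2, and f(x) = (x^2 + (a_5/a_8)^{1/3} x + (a_2/a_8)^{1/3})^3 · (x^3 + a_8 x^2 + (a_8/a_2) x); in particular f does not have distinct roots. -/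
import Mathlib


open Polynomial Matrix

/-- char 3, algebraically closed. If `a_2a_8 ≠ 0` and the second and third rows
of the displayed matrix are linear combinations of the first and fourth rows, then
`a_3 = a_2/a_8`, `a_4 = a_5/a_2`, `a_6 = a_5/a_8`, `a_7 = a_8/a_2`, and
`f = (x² + (a_5/a_8)^{1/3} x + (a_2/a_8)^{1/3})³ (x³ + a_8 x² + (a_8/a_2) x)`
(for the cube roots `u, v`); in particular `f` does not have distinct roots. -/
theorem stmt4 {k : Type*} [Field k] [IsAlgClosed k] [CharP k 3]
    (a2 a3 a4 a5 a6 a7 a8 : k) (f : k[X])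
    (hf : f = X ^ 9 + C a8 * X ^ 8 + C a7 * X ^ 7 + C a6 * X ^ 6 + C a5 * X ^ 5 +
      C a4 * X ^ 4 + C a3 * X ^ 3 + C a2 * X ^ 2 + X)
    (ha : a2 * a8 ≠ 0)
    (M : Matrix (Fin 4) (Fin 4) k)
    (hM : M = !![a2, 1, 0, 0; a5, a4, a3, a2; a8, a7, a6, a5; 0, 0, 1, a8])
    (hrows : ∃ b c s t : k, ∀ j : Fin 4,
      b * M 0 j + c * M 3 j = M 1 j ∧ s * M 0 j + t * M 3 j = M 2 j) :
    a3 = a2 / a8 ∧ a4 = a5 / a2 ∧ a6 = a5 / a8 ∧ a7 = a8 / a2 ∧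
    (∀ u v : k, u ^ 3 = a5 / a8 → v ^ 3 = a2 / a8 →
      f = (X ^ 2 + C u * X + C v) ^ 3 *
        (X ^ 3 + C a8 * X ^ 2 + C (a8 / a2) * X)) ∧
    ¬ Squarefree f := by
  have ha2 : a2 ≠ 0 := fun h => ha (by rw [h, zero_mul])
  have ha8 : a8 ≠ 0 := fun h => ha (by rw [h, mul_zero])
  obtain ⟨b, c, s, t, h⟩ := hrows
  subst hM
  have h0 := h 0; have h1 := h 1; have h2 := h 2; have h3 := h 3
  simp [Matrix.cons_val_zero, Matrix.cons_val_one] at h0 h1 h2 h3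
  -- from h0: b*a2 = a5, s*a2 = a8; h1: b = a4, s = a7; h2: c = a3, t = a6; h3: c*a8 = a2, t*a8 = a5
  have ha3 : a3 = a2 / a8 := by rw [eq_div_iff ha8, ← h2.1]; exact h3.1
  have ha4 : a4 = a5 / a2 := by rw [eq_div_iff ha2, ← h1.1]; exact h0.1
  have ha6 : a6 = a5 / a8 := by rw [eq_div_iff ha8, ← h2.2]; exact h3.2
  have ha7 : a7 = a8 / a2 := by rw [eq_div_iff ha2, ← h1.2]; exact h0.2
  have hfact : ∀ u v : k, u ^ 3 = a5 / a8 → v ^ 3 = a2 / a8 →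
      f = (X ^ 2 + C u * X + C v) ^ 3 *
        (X ^ 3 + C a8 * X ^ 2 + C (a8 / a2) * X) := by
    intro u v hu hv
    have hp : Fact (Nat.Prime 3) := ⟨by norm_num⟩
    have hcube : (X ^ 2 + C u * X + C v : k[X]) ^ 3
        = X ^ 6 + C (a5 / a8) * X ^ 3 + C (a2 / a8) := by
      rw [add_pow_char, add_pow_char, mul_pow, ← pow_mul, ← C_pow, ← C_pow, hu, hv]
    rw [hf, ha3, ha4, ha6, ha7, hcube]
    have E1 : C (a5 / a8) * C a8 = (C a5 : k[X]) := by
      rw [← C_mul, div_mul_cancel₀ _ ha8]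
    have E2 : C (a5 / a8) * C (a8 / a2) = (C (a5 / a2) : k[X]) := by
      rw [← C_mul]; congr 1; field_simp
    have E3 : C (a2 / a8) * C a8 = (C a2 : k[X]) := by
      rw [← C_mul, div_mul_cancel₀ _ ha8]
    have E4 : C (a2 / a8) * C (a8 / a2) = (1 : k[X]) := by
      rw [← C_mul, show a2 / a8 * (a8 / a2) = 1 by field_simp, C_1]
    linear_combination (-(X : k[X]) ^ 5) * E1 - X ^ 4 * E2 - X ^ 2 * E3 - X * E4
  refine ⟨ha3, ha4, ha6, ha7, hfact, ?_⟩
  obtain ⟨u, hu⟩ := IsAlgClosed.exists_pow_nat_eq (a5 / a8) (n := 3) (by norm_num)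
  obtain ⟨v, hv⟩ := IsAlgClosed.exists_pow_nat_eq (a2 / a8) (n := 3) (by norm_num)
  intro hsf
  have hdvd : (X ^ 2 + C u * X + C v) * (X ^ 2 + C u * X + C v) ∣ f := by
    rw [hfact u v hu hv]
    exact Dvd.dvd.mul_right ⟨X ^ 2 + C u * X + C v, by ring⟩ _
  have := hsf _ hdvd
  have hdeg : (X ^ 2 + C u * X + C v : k[X]).natDegree = 2 := by
    have := natDegree_quadratic (a := (1 : k)) (b := u) (c := v) one_ne_zero
    simpa using this
  exact not_isUnit_of_natDegree_pos _ (by rw [hdeg]; norm_num) this
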